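/- The multi-class huberized loss ℓ_M(b, W) = (1/n) Σ_{i=1}^n Σ_{j=1}^J a_{ij} φ_H(b_j + x_iᵀ w_j) is convex and differentiable in (b, W) ∈ ℝ^J × ℝ^{p×J}, and its gradient is Lipschitz continuous with constant L_m = (J/(nδ)) Σ_{i=1}^n (1 + ‖x_i‖²) with respect to the Euclidean norm on (b, W) (Frobenius norm on W). -/

import Mathlib

/-- The huberized hinge loss. -/
noncomputable def phiH (δ t : ℝ) : ℝ :=
  if 1 < t then 0 else if 1 - δ < t then (1 - t) ^ 2 / (2 * δ) else 1 - t - δ / 2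

noncomputable def phiH' (δ t : ℝ) : ℝ :=
  if 1 < t then 0 else if 1 - δ < t then -(1 - t) / δ else -1

lemma phiH_eq {δ : ℝ} (hδ : 0 < δ) (t : ℝ) :
    phiH δ t = ((max 0 (1 - t)) ^ 2 - (max 0 (1 - δ - t)) ^ 2) / (2 * δ) := by
  unfold phiH
  rcases lt_or_ge 1 t with h1 | h1
  · rw [if_pos h1, max_eq_left (by linarith), max_eq_left (by linarith)]; ring
  · rw [if_neg (not_lt.2 h1)]
    rcases lt_or_ge (1 - δ) t with h2 | h2
    · rw [if_pos h2, max_eq_right (by linarith), max_eq_left (by linarith)]; ring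
    · rw [if_neg (not_lt.2 h2), max_eq_right (by linarith), max_eq_right (by linarith)]
      field_simp; ring

lemma hasDerivAt_maxsq (s : ℝ) : HasDerivAt (fun u : ℝ => max 0 u ^ 2) (2 * max 0 s) s := by
  rcases lt_trichotomy s 0 with h | h | h
  · have he : (fun u : ℝ => max 0 u ^ 2) =ᶠ[nhds s] fun _ => (0:ℝ) := by
      filter_upwards [eventually_lt_nhds h] with u hu
      rw [max_eq_left hu.le]; norm_num
    have := (hasDerivAt_const s (0:ℝ)).congr_of_eventuallyEq he
    simpa [max_eq_left h.le] using this
  · subst h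
    rw [hasDerivAt_iff_isLittleO, Asymptotics.isLittleO_iff]
    intro c hc
    filter_upwards [eventually_abs_sub_lt 0 hc] with u hu
    simp only [sub_zero] at hu
    have hm : max (0:ℝ) u ≤ |u| := max_le (abs_nonneg u) (le_abs_self u)
    have h1 : max (0:ℝ) u ^ 2 ≤ |u| ^ 2 := pow_le_pow_left₀ (le_max_left 0 u) hm 2
    have h2 : ‖max (0:ℝ) u ^ 2 - max (0:ℝ) 0 ^ 2 - (u - 0) • (2 * max (0:ℝ) 0)‖
        = max (0:ℝ) u ^ 2 := by
      have h0 : max (0:ℝ) 0 = 0 := max_self 0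
      rw [h0]
      simp only [smul_eq_mul, mul_zero, sub_zero]
      rw [Real.norm_eq_abs]
      rw [show ((0:ℝ))^2 = 0 by norm_num, sub_zero]
      exact abs_of_nonneg (sq_nonneg _)
    rw [h2]
    calc max (0:ℝ) u ^ 2 ≤ |u| ^ 2 := h1
      _ = |u| * |u| := by ring
      _ ≤ c * |u| := mul_le_mul_of_nonneg_right hu.le (abs_nonneg u)
      _ = c * ‖u - 0‖ := by rw [Real.norm_eq_abs, sub_zero]
  · have he : (fun u : ℝ => max 0 u ^ 2) =ᶠ[nhds s] fun u => u ^ 2 := by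
      filter_upwards [eventually_gt_nhds h] with u hu
      rw [max_eq_right hu.le]
    have := (hasDerivAt_pow 2 s).congr_of_eventuallyEq he
    simpa [max_eq_right h.le, mul_comm] using this

lemma phiH_hasDerivAt {δ : ℝ} (hδ : 0 < δ) (t : ℝ) :
    HasDerivAt (phiH δ) (phiH' δ t) t := by
  have h1 : HasDerivAt (fun u : ℝ => 1 - u) (-1) t := by
    simpa using (hasDerivAt_id' t).const_sub (1:ℝ)
  have h2 : HasDerivAt (fun u : ℝ => 1 - δ - u) (-1) t := by
    simpa using (hasDerivAt_id' t).const_sub (1 - δ)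
  have H1 : HasDerivAt (fun u : ℝ => max 0 (1 - u) ^ 2) (2 * max 0 (1 - t) * (-1)) t :=
    (hasDerivAt_maxsq (1 - t)).comp t h1
  have H2 : HasDerivAt (fun u : ℝ => max 0 (1 - δ - u) ^ 2) (2 * max 0 (1 - δ - t) * (-1)) t :=
    (hasDerivAt_maxsq (1 - δ - t)).comp t h2
  have H := (H1.sub H2).div_const (2 * δ)
  have hfun : (fun u => (max 0 (1 - u) ^ 2 - max 0 (1 - δ - u) ^ 2) / (2 * δ)) = phiH δ := by
    funext u; rw [phiH_eq hδ]
  simp only [Pi.sub_apply] at H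
  rw [hfun] at H
  refine H.congr_deriv ?_
  unfold phiH'
  rcases lt_or_ge 1 t with h | h
  · rw [if_pos h, max_eq_left (by linarith), max_eq_left (by linarith)]; ring
  · rw [if_neg (not_lt.2 h)]
    rcases lt_or_ge (1 - δ) t with h2 | h2
    · rw [if_pos h2, max_eq_right (by linarith), max_eq_left (by linarith)]
      field_simp; ring
    · rw [if_neg (not_lt.2 h2), max_eq_right (by linarith), max_eq_right (by linarith)]
      field_simp; ring

lemma phiH'_eq {δ : ℝ} (hδ : 0 < δ) (t : ℝ) :
    phiH' δ t = -(max 0 (min δ (1 - t))) / δ := by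
  unfold phiH'
  rcases lt_or_ge 1 t with h | h
  · rw [if_pos h, min_eq_right (by linarith), max_eq_left (by linarith)]
    simp
  · rw [if_neg (not_lt.2 h)]
    rcases lt_or_ge (1 - δ) t with h2 | h2
    · rw [if_pos h2, min_eq_right (by linarith), max_eq_right (by linarith)]
    · rw [if_neg (not_lt.2 h2), min_eq_left (by linarith), max_eq_right (by linarith)]
      field_simp

lemma phiH'_monotone {δ : ℝ} (hδ : 0 < δ) : Monotone (phiH' δ) := by
  intro u v huv
  rw [phiH'_eq hδ, phiH'_eq hδ]
  gcongr


lemma phiH'_lipschitz {δ : ℝ} (hδ : 0 < δ) (u v : ℝ) :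
    |phiH' δ u - phiH' δ v| ≤ |u - v| / δ := by
  rw [phiH'_eq hδ, phiH'_eq hδ, div_sub_div_same, neg_sub_neg]
  rw [abs_div, abs_of_pos hδ, div_le_div_iff_of_pos_right hδ]
  calc |max 0 (min δ (1 - v)) - max 0 (min δ (1 - u))|
      ≤ max |(0:ℝ) - 0| |min δ (1 - v) - min δ (1 - u)| :=
        abs_max_sub_max_le_max 0 (min δ (1 - v)) 0 (min δ (1 - u))
    _ = |min δ (1 - v) - min δ (1 - u)| := by simp
    _ ≤ max |δ - δ| |(1 - v) - (1 - u)| := abs_min_sub_min_le_max δ (1 - v) δ (1 - u)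
    _ = |(1 - v) - (1 - u)| := by simp
    _ = |u - v| := by rw [show (1 - v) - (1 - u) = u - v by ring]

lemma phiH_convex {δ : ℝ} (hδ : 0 < δ) : ConvexOn ℝ Set.univ (phiH δ) := by
  have hdiff : Differentiable ℝ (phiH δ) := fun t => (phiH_hasDerivAt hδ t).differentiableAt
  have hderiv : deriv (phiH δ) = phiH' δ := funext fun t => (phiH_hasDerivAt hδ t).deriv
  exact Monotone.convexOn_univ_of_deriv hdiff (hderiv ▸ phiH'_monotone hδ)

lemma convexOn_sum_univ {E : Type*} [AddCommMonoid E] [Module ℝ E] {ι : Type*} (s : Finset ι)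
    (f : ι → E → ℝ) (h : ∀ i ∈ s, ConvexOn ℝ Set.univ (f i)) :
    ConvexOn ℝ Set.univ (fun x => ∑ i ∈ s, f i x) := by
  classical
  induction s using Finset.induction_on with
  | empty => simpa using convexOn_const 0 convex_univ
  | @insert c t hni ih =>
    simp only [Finset.sum_insert hni]
    exact (h c (Finset.mem_insert_self c t)).add
      (ih fun i hi => h i (Finset.mem_insert_of_mem hi))

open RealInnerProductSpace in
lemma inner_cvec {p J : ℕ} (x : EuclideanSpace ℝ (Fin p)) (j : Fin J)
    (U : EuclideanSpace ℝ (Fin J ⊕ Fin p × Fin J)) :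
    ⟪(WithLp.equiv 2 _).symm (Sum.elim (fun j' => if j' = j then (1:ℝ) else 0)
      (fun gj : Fin p × Fin J => if gj.2 = j then x gj.1 else 0)), U⟫ =
    U (Sum.inl j) + ∑ g : Fin p, x g * U (Sum.inr (g, j)) := by
  rw [PiLp.inner_apply]
  rw [Fintype.sum_sum_type]
  simp only [WithLp.equiv_symm_apply, PiLp.toLp_apply, Sum.elim_inl, Sum.elim_inr, RCLike.inner_apply,
    starRingEnd_apply, star_trivial, ite_mul, one_mul, zero_mul]
  congr 1
  · simp [Finset.sum_ite_eq' Finset.univ j (fun j' => U (Sum.inl j'))]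
  · rw [Fintype.sum_prod_type]
    congr 1; funext g
    simp [Finset.sum_ite_eq' Finset.univ j (fun j' => x g * U (Sum.inr (g, j'))), mul_comm]

noncomputable def cvec {p J : ℕ} (x : EuclideanSpace ℝ (Fin p)) (j : Fin J) :
    EuclideanSpace ℝ (Fin J ⊕ Fin p × Fin J) :=
  (WithLp.equiv 2 _).symm (Sum.elim (fun j' => if j' = j then (1:ℝ) else 0)
    (fun gj : Fin p × Fin J => if gj.2 = j then x gj.1 else 0))

open RealInnerProductSpace in
lemma inner_cvec' {p J : ℕ} (x : EuclideanSpace ℝ (Fin p)) (j : Fin J)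
    (U : EuclideanSpace ℝ (Fin J ⊕ Fin p × Fin J)) :
    ⟪cvec x j, U⟫ = U (Sum.inl j) + ∑ g : Fin p, x g * U (Sum.inr (g, j)) :=
  inner_cvec x j U

lemma norm_cvec_sq {p J : ℕ} (x : EuclideanSpace ℝ (Fin p)) (j : Fin J) :
    ‖cvec x j‖ ^ 2 = 1 + ‖x‖ ^ 2 := by
  rw [← real_inner_self_eq_norm_sq, inner_cvec' x j]
  have h1 : (cvec x j) (Sum.inl j) = 1 := by simp [cvec]
  have h2 : ∀ g : Fin p, (cvec x j) (Sum.inr (g, j)) = x g := by intro g; simp [cvec]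
  rw [h1]
  congr 1
  have : ∀ g : Fin p, x g * (cvec x j) (Sum.inr (g, j)) = x g * x g := by
    intro g; rw [h2]
  rw [Finset.sum_congr rfl fun g _ => this g]
  rw [← real_inner_self_eq_norm_sq, PiLp.inner_apply]
  simp [RCLike.inner_apply, sq]


open RealInnerProductSpace in
/-- the multi-class huberized loss
`ℓ_M(b,W) = (1/n) ∑ᵢ ∑ⱼ aᵢⱼ φ_H(bⱼ + xᵢᵀ wⱼ)`, viewed as a function of
`U ∈ ℝ^{J} × ℝ^{p×J}` with the Euclidean (Frobenius) norm (here encoded as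
`EuclideanSpace ℝ (Fin J ⊕ Fin p × Fin J)`, with `b_j = U (inl j)` and
`W_{gj} = U (inr (g,j))`), is convex and differentiable with gradient
Lipschitz continuous with constant `L_m = (J/(nδ)) ∑ᵢ (1 + ‖xᵢ‖²)`. -/
theorem mhsvm_loss_convex_diff_lipschitz_grad (n p J : ℕ) (hn : 0 < n)
    (δ : ℝ) (hδ : 0 < δ)
    (x : Fin n → EuclideanSpace ℝ (Fin p)) (y : Fin n → Fin J)
    (a : Fin n → Fin J → ℝ) (ha : ∀ i j, a i j = if y i = j then 0 else 1)
    (ℓM : EuclideanSpace ℝ (Fin J ⊕ Fin p × Fin J) → ℝ)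
    (hℓM : ∀ U, ℓM U = (1 / (n : ℝ)) * ∑ i, ∑ j : Fin J,
      a i j * phiH δ (U (Sum.inl j) + ∑ g : Fin p, x i g * U (Sum.inr (g, j))))
    (Lm : ℝ) (hLm : Lm = ((J : ℝ) / ((n : ℝ) * δ)) * ∑ i, (1 + ‖x i‖ ^ 2)) :
    ConvexOn ℝ Set.univ ℓM ∧
    ∃ grad : EuclideanSpace ℝ (Fin J ⊕ Fin p × Fin J) →
        EuclideanSpace ℝ (Fin J ⊕ Fin p × Fin J),
      (∀ U, HasGradientAt ℓM (grad U) U) ∧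
      ∀ U V, ‖grad U - grad V‖ ≤ Lm * ‖U - V‖ := by
  classical
  set c : Fin n → Fin J → EuclideanSpace ℝ (Fin J ⊕ Fin p × Fin J) :=
    fun i j => cvec (x i) j with hc
  have hℓM' : ℓM = fun U => (1 / (n : ℝ)) * ∑ i, ∑ j, a i j * phiH δ ⟪c i j, U⟫ := by
    funext U
    rw [hℓM U]
    simp only [hc, inner_cvec']
  subst hℓM'
  have ha1 : ∀ i j, |a i j| ≤ 1 := by
    intro i j; rw [ha]; split_ifs <;> norm_num
  have ha0 : ∀ i j, 0 ≤ a i j := by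
    intro i j; rw [ha]; split_ifs <;> norm_num
  constructor
  · -- convexity
    have hconv : ConvexOn ℝ Set.univ (fun U : EuclideanSpace ℝ (Fin J ⊕ Fin p × Fin J) =>
        ∑ i, ∑ j, a i j * phiH δ ⟪c i j, U⟫) := by
      apply convexOn_sum_univ
      intro i _
      apply convexOn_sum_univ
      intro j _
      have hcomp : ConvexOn ℝ Set.univ (fun U : EuclideanSpace ℝ (Fin J ⊕ Fin p × Fin J) =>
          phiH δ ⟪c i j, U⟫) := by
        have := (phiH_convex hδ).comp_linearMap (innerSL ℝ (c i j)).toLinearMap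
        exact this
      simpa [smul_eq_mul] using hcomp.smul (ha0 i j)
    have h1n : (0:ℝ) ≤ 1 / (n:ℝ) := by positivity
    simpa [smul_eq_mul] using hconv.smul h1n
  · -- gradient
    set D : EuclideanSpace ℝ (Fin J ⊕ Fin p × Fin J) →
        (EuclideanSpace ℝ (Fin J ⊕ Fin p × Fin J) →L[ℝ] ℝ) :=
      fun U => (1 / (n:ℝ)) • ∑ i, ∑ j,
        (a i j * phiH' δ ⟪c i j, U⟫) • innerSL ℝ (c i j) with hD
    refine ⟨fun U => (InnerProductSpace.toDual ℝ _).symm (D U), fun U => ?_, fun U V => ?_⟩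
    · apply HasFDerivAt.hasGradientAt
      have hsum : ∀ (i : Fin n) (j : Fin J),
          HasFDerivAt (fun V : EuclideanSpace ℝ (Fin J ⊕ Fin p × Fin J) =>
            a i j * phiH δ ⟪c i j, V⟫)
            ((a i j * phiH' δ ⟪c i j, U⟫) • innerSL ℝ (c i j)) U := by
        intro i j
        have h1 : HasFDerivAt (fun V : EuclideanSpace ℝ (Fin J ⊕ Fin p × Fin J) =>
            (⟪c i j, V⟫ : ℝ)) (innerSL ℝ (c i j)) U := (innerSL ℝ (c i j)).hasFDerivAt
        have h2 := (phiH_hasDerivAt hδ (⟪c i j, U⟫ : ℝ)).comp_hasFDerivAt U h1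
        have h3 := h2.const_mul (a i j)
        have : (a i j) • ((phiH' δ ⟪c i j, U⟫) • innerSL ℝ (c i j)) =
            (a i j * phiH' δ ⟪c i j, U⟫) • innerSL ℝ (c i j) := smul_smul _ _ _
        rw [← this]
        exact h3
      have hS : HasFDerivAt (fun V : EuclideanSpace ℝ (Fin J ⊕ Fin p × Fin J) =>
          ∑ i, ∑ j, a i j * phiH δ ⟪c i j, V⟫)
          (∑ i, ∑ j, (a i j * phiH' δ ⟪c i j, U⟫) • innerSL ℝ (c i j)) U :=
        HasFDerivAt.fun_sum fun i _ => HasFDerivAt.fun_sum fun j _ => hsum i j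
      have := hS.const_mul (1 / (n:ℝ))
      exact this
    · -- Lipschitz bound
      rw [← LinearIsometryEquiv.map_sub, LinearIsometryEquiv.norm_map]
      set T : Fin n → Fin J → (EuclideanSpace ℝ (Fin J ⊕ Fin p × Fin J) →L[ℝ] ℝ) :=
        fun i j => (a i j * phiH' δ ⟪c i j, U⟫ - a i j * phiH' δ ⟪c i j, V⟫) •
          innerSL ℝ (c i j) with hT
      have hDsub : D U - D V = (1 / (n:ℝ)) • ∑ i, ∑ j, T i j := by
        have e1 : D U = (1 / (n:ℝ)) • ∑ i, ∑ j,
            (a i j * phiH' δ ⟪c i j, U⟫) • innerSL ℝ (c i j) := by simp only [hD]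
        have e2 : D V = (1 / (n:ℝ)) • ∑ i, ∑ j,
            (a i j * phiH' δ ⟪c i j, V⟫) • innerSL ℝ (c i j) := by simp only [hD]
        erw [e1, e2, ← smul_sub, ← Finset.sum_sub_distrib]
        congr 1
        refine Finset.sum_congr rfl fun i _ => ?_
        rw [← Finset.sum_sub_distrib]
        refine Finset.sum_congr rfl fun j _ => ?_
        simp only [hT]
        rw [sub_smul]
      have hterm : ∀ i j, ‖T i j‖ ≤ (1 + ‖x i‖ ^ 2) / δ * ‖U - V‖ := by
        intro i j
        simp only [hT]
        rw [norm_smul (a i j * phiH' δ ⟪c i j, U⟫ - a i j * phiH' δ ⟪c i j, V⟫)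
          (innerSL ℝ (c i j)), innerSL_apply_norm]
        have h2 : ‖a i j * phiH' δ ⟪c i j, U⟫ - a i j * phiH' δ ⟪c i j, V⟫‖ =
            |a i j| * |phiH' δ ⟪c i j, U⟫ - phiH' δ ⟪c i j, V⟫| := by
          rw [Real.norm_eq_abs, ← mul_sub, abs_mul]
        have h3 : |phiH' δ ⟪c i j, U⟫ - phiH' δ ⟪c i j, V⟫| ≤ |(⟪c i j, U - V⟫ : ℝ)| / δ := by
          have := phiH'_lipschitz hδ (⟪c i j, U⟫ : ℝ) ⟪c i j, V⟫
          rwa [← inner_sub_right] at this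
        have h4 : |(⟪c i j, U - V⟫ : ℝ)| ≤ ‖c i j‖ * ‖U - V‖ := abs_real_inner_le_norm _ _
        have hnc : ‖c i j‖ ^ 2 = 1 + ‖x i‖ ^ 2 := norm_cvec_sq (x i) j
        have hcn : (0:ℝ) ≤ ‖c i j‖ := norm_nonneg _
        calc ‖a i j * phiH' δ ⟪c i j, U⟫ - a i j * phiH' δ ⟪c i j, V⟫‖ * ‖c i j‖
            ≤ (1 * (|(⟪c i j, U - V⟫ : ℝ)| / δ)) * ‖c i j‖ := by
              rw [h2]
              apply mul_le_mul_of_nonneg_right _ hcn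
              exact mul_le_mul (ha1 i j) h3 (abs_nonneg _) (by norm_num)
          _ ≤ (1 * ((‖c i j‖ * ‖U - V‖) / δ)) * ‖c i j‖ := by
              apply mul_le_mul_of_nonneg_right _ hcn
              rw [one_mul, one_mul]
              exact div_le_div_of_nonneg_right h4 hδ.le |>.trans_eq rfl
          _ = ‖c i j‖ ^ 2 / δ * ‖U - V‖ := by ring
          _ = (1 + ‖x i‖ ^ 2) / δ * ‖U - V‖ := by rw [hnc]
      calc ‖D U - D V‖ = |1 / (n:ℝ)| * ‖∑ i, ∑ j, T i j‖ := by
            rw [hDsub, norm_smul (1 / (n:ℝ)) (∑ i, ∑ j, T i j), Real.norm_eq_abs]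
        _ ≤ (1 / (n:ℝ)) * ∑ i, ∑ j, ‖T i j‖ := by
            rw [abs_of_nonneg (by positivity : (0:ℝ) ≤ 1 / (n:ℝ))]
            apply mul_le_mul_of_nonneg_left _ (by positivity : (0:ℝ) ≤ 1 / (n:ℝ))
            exact (norm_sum_le _ _).trans (Finset.sum_le_sum fun i _ => norm_sum_le _ _)
        _ ≤ (1 / (n:ℝ)) * ∑ i, ∑ _j : Fin J, (1 + ‖x i‖ ^ 2) / δ * ‖U - V‖ := by
            apply mul_le_mul_of_nonneg_left _ (by positivity : (0:ℝ) ≤ 1 / (n:ℝ))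
            exact Finset.sum_le_sum fun i _ => Finset.sum_le_sum fun j _ => hterm i j
        _ = Lm * ‖U - V‖ := by
            rw [hLm]
            simp only [Finset.sum_const, Finset.card_univ, Fintype.card_fin, nsmul_eq_mul]
            rw [Finset.mul_sum, Finset.mul_sum, Finset.sum_mul]
            refine Finset.sum_congr rfl fun i _ => ?_
            have hn' : (n:ℝ) ≠ 0 := Nat.cast_ne_zero.mpr hn.ne'
            field_simp
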